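/- (Greenfield–Wallach characterization for Fourier multipliers.) Let n ≥ 1 and let p : ℤⁿ → ℂ be a symbol of order m for some m ∈ ℝ. Then p(D) is globally hypoelliptic (GH) if and only if: (i) the set {ξ ∈ ℤⁿ : p(ξ) = 0} is finite, and (ii) there exist constants K, L > 0 such that |p(ξ)| ≥ K·|ξ|^(−L) for all ξ ∈ ℤⁿ \ {0} with p(ξ) ≠ 0. -/

import Mathlib

open scoped BigOperators

/-- `|ξ| = Σⱼ |ξⱼ|`. -/
noncomputable def l1norm {n : ℕ} (ξ : Fin n → ℤ) : ℝ := ∑ j, |(ξ j : ℝ)|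

/-- `‖ξ‖² = Σⱼ ξⱼ²`. -/
noncomputable def l2normSq {n : ℕ} (ξ : Fin n → ℤ) : ℝ := ∑ j, ((ξ j : ℝ)) ^ 2

/-- `u ∈ H^k(𝕋ⁿ)` in terms of its Fourier coefficients. -/
def InSobolev {n : ℕ} (k : ℝ) (u : (Fin n → ℤ) → ℂ) : Prop :=
  Summable fun ξ : Fin n → ℤ => (1 + l2normSq ξ) ^ k * ‖u ξ‖ ^ 2

/-- Polynomial growth of Fourier coefficients (a distribution on `𝕋ⁿ`). -/
def PolyGrowth {n : ℕ} (u : (Fin n → ℤ) → ℂ) : Prop :=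
  ∃ C N : ℝ, 0 < C ∧ 0 < N ∧
    ∀ ξ, ‖u ξ‖ ≤ C * (1 + Real.sqrt (l2normSq ξ)) ^ N

/-- Rapidly decreasing Fourier coefficients (a smooth function on `𝕋ⁿ`). -/
def RapidDecay {n : ℕ} (v : (Fin n → ℤ) → ℂ) : Prop :=
  ∀ N : ℝ, 0 < N → ∃ C : ℝ, 0 < C ∧
    ∀ ξ, ‖v ξ‖ ≤ C * (1 + Real.sqrt (l2normSq ξ)) ^ (-N)

/-- `p` is a symbol of order `m`. -/
def SymbolOrder {n : ℕ} (m : ℝ) (p : (Fin n → ℤ) → ℂ) : Prop :=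
  ∃ C : ℝ, 0 < C ∧ ∀ ξ, ‖p ξ‖ ≤ C * (1 + l2normSq ξ) ^ (m / 2)

/-- `p(D)` is globally hypoelliptic with loss of `r` derivatives (GH-`r`). -/
def GHr {n : ℕ} (m r : ℝ) (p : (Fin n → ℤ) → ℂ) : Prop :=
  ∀ (k : ℝ) (u : (Fin n → ℤ) → ℂ), PolyGrowth u →
    InSobolev k (fun ξ => p ξ * u ξ) → InSobolev (k + m - r) u

/-- `p(D)` is globally solvable with loss of `r` derivatives (GS-`r`). -/
def GSr {n : ℕ} (m r : ℝ) (p : (Fin n → ℤ) → ℂ) : Prop :=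
  ∀ (k : ℝ) (f : (Fin n → ℤ) → ℂ), InSobolev k f → (∀ ξ, p ξ = 0 → f ξ = 0) →
    ∃ u : (Fin n → ℤ) → ℂ, InSobolev (k + m - r) u ∧ ∀ ξ, p ξ * u ξ = f ξ

/-- `p(D)` is globally hypoelliptic (GH). -/
def GloballyHypoelliptic {n : ℕ} (p : (Fin n → ℤ) → ℂ) : Prop :=
  ∀ u : (Fin n → ℤ) → ℂ, PolyGrowth u →
    RapidDecay (fun ξ => p ξ * u ξ) → RapidDecay u

lemma l2_nonneg {n : ℕ} (ξ : Fin n → ℤ) : 0 ≤ l2normSq ξ :=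
  Finset.sum_nonneg fun _ _ => sq_nonneg _

lemma l1_nonneg {n : ℕ} (ξ : Fin n → ℤ) : 0 ≤ l1norm ξ :=
  Finset.sum_nonneg fun _ _ => abs_nonneg _

lemma abs_coord_le_sqrt {n : ℕ} (ξ : Fin n → ℤ) (j : Fin n) :
    |(ξ j : ℝ)| ≤ Real.sqrt (l2normSq ξ) := by
  rw [Real.le_sqrt (abs_nonneg _) (l2_nonneg ξ), sq_abs]
  ·
    exact Finset.single_le_sum (f := fun k => ((ξ k : ℝ))^2) (fun _ _ => sq_nonneg _) (Finset.mem_univ j)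

lemma sqrt_le_l1 {n : ℕ} (ξ : Fin n → ℤ) : Real.sqrt (l2normSq ξ) ≤ l1norm ξ := by
  have h : l2normSq ξ ≤ (l1norm ξ)^2 := by
    have := Finset.sum_sq_le_sq_sum_of_nonneg (s := Finset.univ)
      (f := fun j : Fin n => |(ξ j : ℝ)|) (fun _ _ => abs_nonneg _)
    simpa [l2normSq, l1norm, sq_abs] using this
  calc Real.sqrt (l2normSq ξ) ≤ Real.sqrt ((l1norm ξ)^2) := Real.sqrt_le_sqrt h
    _ = l1norm ξ := Real.sqrt_sq (l1_nonneg ξ)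

lemma l1_le_n_sqrt {n : ℕ} (ξ : Fin n → ℤ) : l1norm ξ ≤ n * Real.sqrt (l2normSq ξ) := by
  have h : ∀ j ∈ Finset.univ, |(ξ j : ℝ)| ≤ Real.sqrt (l2normSq ξ) :=
    fun j _ => abs_coord_le_sqrt ξ j
  calc l1norm ξ ≤ ∑ _j : Fin n, Real.sqrt (l2normSq ξ) := Finset.sum_le_sum h
    _ = n * Real.sqrt (l2normSq ξ) := by simp [mul_comm]

lemma one_le_l1 {n : ℕ} {ξ : Fin n → ℤ} (h : ξ ≠ 0) : 1 ≤ l1norm ξ := by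
  obtain ⟨j, hj⟩ : ∃ j, ξ j ≠ 0 := by
    by_contra hc; push_neg at hc; exact h (funext hc)
  have h1 : (1 : ℝ) ≤ |(ξ j : ℝ)| := by
    have := Int.one_le_abs hj
    exact_mod_cast (by push_cast; exact_mod_cast this : (1:ℝ) ≤ |(ξ j : ℤ)|)
  calc (1:ℝ) ≤ |(ξ j : ℝ)| := h1
    _ ≤ l1norm ξ := Finset.single_le_sum (f := fun k => |(ξ k : ℝ)|)
        (fun _ _ => abs_nonneg _) (Finset.mem_univ j)

lemma finite_sqrt_le {n : ℕ} (B : ℝ) :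
    {ξ : Fin n → ℤ | Real.sqrt (l2normSq ξ) ≤ B}.Finite := by
  apply Set.Finite.subset
    (Finset.finite_toSet (Finset.Icc (fun _ : Fin n => -⌈B⌉) (fun _ => ⌈B⌉)))
  intro ξ hξ
  simp only [Set.mem_setOf_eq] at hξ
  simp only [Finset.coe_Icc, Set.mem_Icc, Pi.le_def]
  have key : ∀ j, -⌈B⌉ ≤ ξ j ∧ ξ j ≤ ⌈B⌉ := by
    intro j
    have h1 : |(ξ j : ℝ)| ≤ B := (abs_coord_le_sqrt ξ j).trans hξ
    have h2 : ((|ξ j| : ℤ) : ℝ) ≤ ((⌈B⌉ : ℤ) : ℝ) := by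
      rw [Int.cast_abs]; exact h1.trans (Int.le_ceil B)
    have h3 : |ξ j| ≤ ⌈B⌉ := by exact_mod_cast h2
    exact abs_le.mp h3
  exact ⟨fun j => (key j).1, fun j => (key j).2⟩

lemma finite_l1_le {n : ℕ} (B : ℝ) : {ξ : Fin n → ℤ | l1norm ξ ≤ B}.Finite :=
  (finite_sqrt_le B).subset fun ξ hξ => le_trans (sqrt_le_l1 ξ) hξ

lemma a_pos {n : ℕ} (ξ : Fin n → ℤ) : (0:ℝ) < 1 + Real.sqrt (l2normSq ξ) := by
  have := Real.sqrt_nonneg (l2normSq ξ); linarith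

lemma backward {n : ℕ} (p : (Fin n → ℤ) → ℂ)
    (hfin : {ξ : Fin n → ℤ | p ξ = 0}.Finite)
    (K L : ℝ) (hK : 0 < K) (hL : 0 < L)
    (hlow : ∀ ξ, ξ ≠ 0 → p ξ ≠ 0 → K * l1norm ξ ^ (-L) ≤ ‖p ξ‖) :
    GloballyHypoelliptic p := by
  intro u _hu hv N hN
  obtain ⟨C₁, hC₁, hC₁v⟩ := hv (N + L) (by linarith)
  have hBfin : ({ξ : Fin n → ℤ | p ξ = 0} ∪ {0}).Finite := hfin.union (Set.finite_singleton 0)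
  obtain ⟨C₂, hC₂⟩ := (hBfin.image
    (fun ξ => ‖u ξ‖ * (1 + Real.sqrt (l2normSq ξ)) ^ N)).bddAbove
  refine ⟨max (max C₂ (C₁ * (n:ℝ) ^ L / K)) 1, lt_of_lt_of_le one_pos (le_max_right _ _),
    fun ξ => ?_⟩
  set a := 1 + Real.sqrt (l2normSq ξ) with ha_def
  have ha : 0 < a := a_pos ξ
  have haN : (0:ℝ) ≤ a ^ (-N) := (Real.rpow_pos_of_pos ha _).le
  by_cases hmem : ξ ∈ ({ξ : Fin n → ℤ | p ξ = 0} ∪ {0} : Set (Fin n → ℤ))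
  · have hb : ‖u ξ‖ * a ^ N ≤ C₂ := hC₂ (Set.mem_image_of_mem _ hmem)
    have heq : ‖u ξ‖ = (‖u ξ‖ * a ^ N) * a ^ (-N) := by
      rw [mul_assoc, ← Real.rpow_add ha, add_neg_cancel, Real.rpow_zero, mul_one]
    rw [heq]
    exact mul_le_mul_of_nonneg_right
      (hb.trans ((le_max_left _ _).trans (le_max_left _ _))) haN
  · have hp0 : p ξ ≠ 0 := fun h => hmem (Or.inl h)
    have hξ0 : ξ ≠ 0 := fun h => hmem (Or.inr h)
    have hpabs : 0 < ‖p ξ‖ := norm_pos_iff.mpr hp0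
    have hl1 : (1:ℝ) ≤ l1norm ξ := one_le_l1 hξ0
    have hl1pos : (0:ℝ) < l1norm ξ := lt_of_lt_of_le one_pos hl1
    have h1 : ‖p ξ‖ * ‖u ξ‖ ≤ C₁ * a ^ (-(N+L)) := by
      have := hC₁v ξ
      simpa [map_mul] using this
    have h2 : K * l1norm ξ ^ (-L) ≤ ‖p ξ‖ := hlow ξ hξ0 hp0
    have hKl : 0 < K * l1norm ξ ^ (-L) := mul_pos hK (Real.rpow_pos_of_pos hl1pos _)
    have h3 : ‖u ξ‖ ≤ C₁ * a ^ (-(N+L)) / (K * l1norm ξ ^ (-L)) := by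
      rw [le_div_iff₀ hKl]
      calc ‖u ξ‖ * (K * l1norm ξ ^ (-L))
          ≤ ‖u ξ‖ * ‖p ξ‖ :=
            mul_le_mul_of_nonneg_left h2 (norm_nonneg _)
        _ = ‖p ξ‖ * ‖u ξ‖ := mul_comm _ _
        _ ≤ C₁ * a ^ (-(N+L)) := h1
    have h4 : C₁ * a ^ (-(N+L)) / (K * l1norm ξ ^ (-L))
        = (C₁ / K) * (l1norm ξ ^ L * a ^ (-(N+L))) := by
      rw [div_eq_mul_inv, mul_inv, Real.rpow_neg hl1pos.le, inv_inv]
      ring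
    have h5 : l1norm ξ ^ L ≤ (n:ℝ) ^ L * a ^ L := by
      have hle : l1norm ξ ≤ (n:ℝ) * a := by
        have h6 := l1_le_n_sqrt ξ
        have h7 : (n:ℝ) * Real.sqrt (l2normSq ξ) ≤ (n:ℝ) * a := by
          apply mul_le_mul_of_nonneg_left _ (Nat.cast_nonneg n)
          rw [ha_def]; linarith
        linarith
      calc l1norm ξ ^ L ≤ ((n:ℝ) * a) ^ L := Real.rpow_le_rpow (l1_nonneg ξ) hle hL.le
        _ = (n:ℝ)^L * a^L := Real.mul_rpow (Nat.cast_nonneg n) ha.le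
    have h6 : a ^ L * a ^ (-(N+L)) = a ^ (-N) := by
      rw [← Real.rpow_add ha]; ring_nf
    calc ‖u ξ‖ ≤ (C₁ / K) * (l1norm ξ ^ L * a ^ (-(N+L))) := h4 ▸ h3
      _ ≤ (C₁ / K) * (((n:ℝ)^L * a^L) * a ^ (-(N+L))) := by
          apply mul_le_mul_of_nonneg_left _ (div_nonneg hC₁.le hK.le)
          exact mul_le_mul_of_nonneg_right h5 (Real.rpow_pos_of_pos ha _).le
      _ = (C₁ * (n:ℝ)^L / K) * a ^ (-N) := by rw [mul_assoc, h6]; ring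
      _ ≤ max (max C₂ (C₁ * (n:ℝ) ^ L / K)) 1 * a ^ (-N) :=
          mul_le_mul_of_nonneg_right ((le_max_right _ _).trans (le_max_left _ _)) haN

lemma indicator_polyGrowth {n : ℕ} (S : Set (Fin n → ℤ)) [DecidablePred (· ∈ S)] :
    PolyGrowth (fun ξ => if ξ ∈ S then (1:ℂ) else 0) := by
  refine ⟨1, 1, one_pos, one_pos, fun ξ => ?_⟩
  rw [Real.rpow_one, one_mul]
  have hs := Real.sqrt_nonneg (l2normSq ξ)
  by_cases h : ξ ∈ S <;> simp [h] <;> linarith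

/-- RapidDecay at N = 1 gives a bound 1 + √(l2normSq ξ) ≤ C wherever |v ξ| ≥ 1 -/

lemma decay_bound {n : ℕ} {v : (Fin n → ℤ) → ℂ} {C : ℝ}
    (hb : ∀ ξ, ‖v ξ‖ ≤ C * (1 + Real.sqrt (l2normSq ξ)) ^ (-(1:ℝ)))
    {ξ : Fin n → ℤ} (h1 : ‖v ξ‖ = 1) :
    1 + Real.sqrt (l2normSq ξ) ≤ C := by
  have ha := a_pos ξ
  have h2 := hb ξ
  rw [h1, Real.rpow_neg_one] at h2
  have h3 := mul_le_mul_of_nonneg_right h2 ha.le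
  rwa [one_mul, mul_assoc, inv_mul_cancel₀ (ne_of_gt ha), mul_one] at h3

/-- forward, part 1: zero set finite -/

lemma forward_finite {n : ℕ} (p : (Fin n → ℤ) → ℂ) (hGH : GloballyHypoelliptic p) :
    {ξ : Fin n → ℤ | p ξ = 0}.Finite := by
  classical
  by_contra hinf
  set u : (Fin n → ℤ) → ℂ := fun ξ => if ξ ∈ {ξ : Fin n → ℤ | p ξ = 0} then 1 else 0 with hu
  have hpg : PolyGrowth u := indicator_polyGrowth _
  have hrd : RapidDecay (fun ξ => p ξ * u ξ) := by
    intro N hN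
    refine ⟨1, one_pos, fun ξ => ?_⟩
    have h0 : p ξ * u ξ = 0 := by
      by_cases h : p ξ = 0 <;> simp [hu, h]
    show ‖p ξ * u ξ‖ ≤ _
    rw [h0, norm_zero]
    positivity
  obtain ⟨C, hC, hCb⟩ := hGH u hpg hrd 1 one_pos
  apply hinf
  apply (finite_sqrt_le (C - 1)).subset
  intro ξ hξ
  have h1 : ‖u ξ‖ = 1 := by
    have : p ξ = 0 := hξ
    simp [hu, this]
  have h2 := decay_bound hCb h1
  simp only [Set.mem_setOf_eq]
  linarith

/-- forward, part 2: for each k there is a point far out where p is very small,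
assuming the lower bound fails -/

lemma exists_small {n : ℕ} (p : (Fin n → ℤ) → ℂ)
    (hbad : ∀ K L : ℝ, 0 < K → 0 < L → ∃ ξ : Fin n → ℤ, ξ ≠ 0 ∧ p ξ ≠ 0 ∧
      ‖p ξ‖ < K * l1norm ξ ^ (-L)) (k : ℕ) :
    ∃ ξ : Fin n → ℤ, ξ ≠ 0 ∧ p ξ ≠ 0 ∧ ((k:ℝ)+1) ≤ l1norm ξ ∧
      ‖p ξ‖ < l1norm ξ ^ (-((k:ℝ)+1)) := by
  classical
  by_contra hc
  push_neg at hc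
  -- hc : ∀ ξ, ξ ≠ 0 → p ξ ≠ 0 → (k+1) ≤ l1norm ξ → l1norm ξ ^ (-(k+1)) ≤ |p ξ|
  set S : Set (Fin n → ℤ) := {ξ | ξ ≠ 0 ∧ p ξ ≠ 0 ∧ l1norm ξ < (k:ℝ)+1} with hS
  have hSfin : S.Finite := (finite_l1_le ((k:ℝ)+1)).subset (fun ξ hξ => le_of_lt hξ.2.2)
  set T := hSfin.toFinset with hT
  set g : (Fin n → ℤ) → ℝ := fun ξ => ‖p ξ‖ * l1norm ξ ^ ((k:ℝ)+1) with hg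
  set K : ℝ := if hTne : T.Nonempty then min 1 (T.inf' hTne g) else 1 with hKdef
  have hK1 : K ≤ 1 := by
    rw [hKdef]; split
    · exact min_le_left _ _
    · exact le_refl 1
  have hKpos : 0 < K := by
    rw [hKdef]; split
    case isTrue hTne =>
      apply lt_min one_pos
      rw [Finset.lt_inf'_iff]
      intro x hx
      rw [hT, Set.Finite.mem_toFinset] at hx
      exact mul_pos (norm_pos_iff.mpr hx.2.1)
        (Real.rpow_pos_of_pos (lt_of_lt_of_le one_pos (one_le_l1 hx.1)) _)
    case isFalse => exact one_pos
  obtain ⟨ξ, hξ0, hpξ, hlt⟩ := hbad K ((k:ℝ)+1) hKpos (by positivity)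
  have hl1 : (1:ℝ) ≤ l1norm ξ := one_le_l1 hξ0
  have hl1pos : (0:ℝ) < l1norm ξ := lt_of_lt_of_le one_pos hl1
  have hrpos : (0:ℝ) < l1norm ξ ^ (-((k:ℝ)+1)) := Real.rpow_pos_of_pos hl1pos _
  have hge : K * l1norm ξ ^ (-((k:ℝ)+1)) ≤ ‖p ξ‖ := by
    by_cases hcase : (k:ℝ)+1 ≤ l1norm ξ
    · have := hc ξ hξ0 hpξ hcase
      calc K * l1norm ξ ^ (-((k:ℝ)+1)) ≤ 1 * l1norm ξ ^ (-((k:ℝ)+1)) :=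
          mul_le_mul_of_nonneg_right hK1 hrpos.le
        _ = l1norm ξ ^ (-((k:ℝ)+1)) := one_mul _
        _ ≤ ‖p ξ‖ := this
    · push_neg at hcase
      have hmemS : ξ ∈ S := ⟨hξ0, hpξ, hcase⟩
      have hmemT : ξ ∈ T := by rw [hT, Set.Finite.mem_toFinset]; exact hmemS
      have hTne : T.Nonempty := ⟨ξ, hmemT⟩
      have hKg : K ≤ g ξ := by
        rw [hKdef, dif_pos hTne]
        exact (min_le_right _ _).trans (Finset.inf'_le g hmemT)
      have := mul_le_mul_of_nonneg_right hKg hrpos.le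
      rwa [hg, mul_assoc, ← Real.rpow_add hl1pos, add_neg_cancel, Real.rpow_zero,
        mul_one] at this
  exact absurd hlt (not_lt.mpr hge)

lemma forward_bound {n : ℕ} (hn : 1 ≤ n) (p : (Fin n → ℤ) → ℂ)
    (hGH : GloballyHypoelliptic p) :
    ∃ K L : ℝ, 0 < K ∧ 0 < L ∧ ∀ ξ : Fin n → ℤ, ξ ≠ 0 → p ξ ≠ 0 →
      K * l1norm ξ ^ (-L) ≤ ‖p ξ‖ := by
  classical
  by_contra hbad
  push_neg at hbad
  choose ξs h0 hp0 hgek hltk using fun k => exists_small p hbad k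
  set u : (Fin n → ℤ) → ℂ := fun ζ => if ζ ∈ Set.range ξs then 1 else 0 with hu
  have hpg : PolyGrowth u := indicator_polyGrowth _
  have hrd : RapidDecay (fun ζ => p ζ * u ζ) := by
    intro N hN
    set k0 := ⌈N⌉₊ + 1 with hk0
    obtain ⟨C₂, hC₂⟩ := ((Finset.range k0).image
      (fun k => ‖p (ξs k)‖ * (1 + Real.sqrt (l2normSq (ξs k))) ^ N)).bddAbove
    refine ⟨max (max ((2:ℝ) ^ N) C₂) 1, lt_of_lt_of_le one_pos (le_max_right _ _),
      fun ζ => ?_⟩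
    have ha := a_pos ζ
    have haN : (0:ℝ) ≤ (1 + Real.sqrt (l2normSq ζ)) ^ (-N) := (Real.rpow_pos_of_pos ha _).le
    show ‖p ζ * u ζ‖ ≤ _
    by_cases hζ : ζ ∈ Set.range ξs
    · have hu1 : u ζ = 1 := by rw [hu]; exact if_pos hζ
      rw [hu1, mul_one]
      obtain ⟨k, hk⟩ := hζ
      subst hk
      by_cases hsmall : k < k0
      · have hb : ‖p (ξs k)‖ * (1 + Real.sqrt (l2normSq (ξs k))) ^ N ≤ C₂ :=
          hC₂ (Finset.mem_coe.mpr
            (Finset.mem_image_of_mem _ (Finset.mem_range.mpr hsmall)))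
        have heq : ‖p (ξs k)‖ =
            (‖p (ξs k)‖ * (1 + Real.sqrt (l2normSq (ξs k))) ^ N) *
              (1 + Real.sqrt (l2normSq (ξs k))) ^ (-N) := by
          rw [mul_assoc, ← Real.rpow_add (a_pos _), add_neg_cancel, Real.rpow_zero, mul_one]
        rw [heq]
        exact mul_le_mul_of_nonneg_right
          (hb.trans ((le_max_right _ _).trans (le_max_left _ _))) haN
      · push_neg at hsmall
        have hl1 : 1 ≤ l1norm (ξs k) := one_le_l1 (h0 k)
        have hl1pos : (0:ℝ) < l1norm (ξs k) := lt_of_lt_of_le one_pos hl1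
        have hNk : N ≤ (k:ℝ) + 1 := by
          have h1 : N ≤ (⌈N⌉₊ : ℝ) := Nat.le_ceil N
          have h2 : (k0:ℝ) ≤ (k:ℝ) := Nat.cast_le.mpr hsmall
          rw [hk0] at h2; push_cast at h2; linarith
        have hchain : ‖p (ξs k)‖ < l1norm (ξs k) ^ (-N) :=
          lt_of_lt_of_le (hltk k)
            (Real.rpow_le_rpow_of_exponent_le hl1 (by linarith))
        have hsl : Real.sqrt (l2normSq (ξs k)) ≤ l1norm (ξs k) := sqrt_le_l1 _
        have hal : (1 + Real.sqrt (l2normSq (ξs k))) ≤ 2 * l1norm (ξs k) := by linarith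
        have h4 : (1 + Real.sqrt (l2normSq (ξs k))) ^ N ≤ (2:ℝ) ^ N * l1norm (ξs k) ^ N := by
          calc (1 + Real.sqrt (l2normSq (ξs k))) ^ N ≤ (2 * l1norm (ξs k)) ^ N :=
              Real.rpow_le_rpow (a_pos _).le hal hN.le
            _ = (2:ℝ) ^ N * l1norm (ξs k) ^ N := Real.mul_rpow (by norm_num) hl1pos.le
        have hl1N : (0:ℝ) < l1norm (ξs k) ^ N := Real.rpow_pos_of_pos hl1pos N
        have haNpos : (0:ℝ) < (1 + Real.sqrt (l2normSq (ξs k))) ^ N :=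
          Real.rpow_pos_of_pos (a_pos _) N
        have h5 : l1norm (ξs k) ^ (-N) ≤
            (2:ℝ) ^ N * (1 + Real.sqrt (l2normSq (ξs k))) ^ (-N) := by
          rw [Real.rpow_neg hl1pos.le, Real.rpow_neg (a_pos _).le]
          have h6 : (l1norm (ξs k) ^ N)⁻¹ * ((1 + Real.sqrt (l2normSq (ξs k))) ^ N) ≤
              (2:ℝ) ^ N := by
            rw [← div_eq_inv_mul, div_le_iff₀ hl1N]
            exact h4
          calc (l1norm (ξs k) ^ N)⁻¹
              = ((l1norm (ξs k) ^ N)⁻¹ * ((1 + Real.sqrt (l2normSq (ξs k))) ^ N)) *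
                  ((1 + Real.sqrt (l2normSq (ξs k))) ^ N)⁻¹ := by field_simp
            _ ≤ (2:ℝ) ^ N * ((1 + Real.sqrt (l2normSq (ξs k))) ^ N)⁻¹ :=
                mul_le_mul_of_nonneg_right h6 (inv_nonneg.mpr haNpos.le)
        calc ‖p (ξs k)‖ ≤ l1norm (ξs k) ^ (-N) := hchain.le
          _ ≤ (2:ℝ) ^ N * (1 + Real.sqrt (l2normSq (ξs k))) ^ (-N) := h5
          _ ≤ max (max ((2:ℝ) ^ N) C₂) 1 * (1 + Real.sqrt (l2normSq (ξs k))) ^ (-N) :=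
              mul_le_mul_of_nonneg_right ((le_max_left _ _).trans (le_max_left _ _))
                (Real.rpow_pos_of_pos (a_pos _) _).le
    · have hu0 : u ζ = 0 := by rw [hu]; exact if_neg hζ
      rw [hu0, mul_zero, norm_zero]
      positivity
  obtain ⟨C, hC, hCb⟩ := hGH u hpg hrd 1 one_pos
  set k := ⌈C * n⌉₊ with hk
  have hu1 : ‖u (ξs k)‖ = 1 := by
    have : u (ξs k) = 1 := by rw [hu]; exact if_pos ⟨k, rfl⟩
    rw [this, norm_one]
  have h2 := decay_bound hCb hu1
  have hs : ((k:ℝ) + 1) ≤ l1norm (ξs k) := hgek k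
  have hln := l1_le_n_sqrt (ξs k)
  have hkC : C * n ≤ (k:ℝ) := Nat.le_ceil _
  have hn1 : (1:ℝ) ≤ n := by exact_mod_cast hn
  have hsn : (0:ℝ) ≤ Real.sqrt (l2normSq (ξs k)) := Real.sqrt_nonneg _
  have h7 : (n:ℝ) * Real.sqrt (l2normSq (ξs k)) ≤ n * (C - 1) :=
    mul_le_mul_of_nonneg_left (by linarith) (by linarith)
  nlinarith [hkC, hs, hln, h7, hn1]

theorem stmt_3 {n : ℕ} (hn : 1 ≤ n) (m : ℝ)
    (p : (Fin n → ℤ) → ℂ) (hp : SymbolOrder m p) :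
    GloballyHypoelliptic p ↔
      ({ξ : Fin n → ℤ | p ξ = 0}.Finite ∧
        ∃ K L : ℝ, 0 < K ∧ 0 < L ∧ ∀ ξ : Fin n → ℤ, ξ ≠ 0 → p ξ ≠ 0 →
          K * l1norm ξ ^ (-L) ≤ ‖p ξ‖) := by
  constructor
  · intro hGH
    exact ⟨forward_finite p hGH, forward_bound hn p hGH⟩
  · rintro ⟨hfin, K, L, hK, hL, hlow⟩
    exact backward p hfin K L hK hL hlow
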